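/- arXiv:1503.04106 — 11 statements merged into one kernel-verified Lean document; each statement's English description precedes it below -/
import Mathlib

section
/- Let n ≥ 4 be an even integer. Then the DCT-I matrix satisfies the factorization C^I_{n+1} = P_{n+1}^T · blkdiag(C^I_{n/2+1}, C^III_{n/2}) · Ĥ_{n+1}, where blkdiag(A,B) denotes the block-diagonal matrix with diagonal blocks A and B. -/
open Matrix Real

/-- `ε_n(j)`: `1/√2` if `j = 0` or `j = n`, else `1`. -/
noncomputable def eps (n j : ℕ) : ℝ := if j = 0 ∨ j = n then 1 / Real.sqrt 2 else 1

/-- DCT-I matrix of size `(n+1) × (n+1)`. -/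
noncomputable def C1 (n : ℕ) : Matrix (Fin (n + 1)) (Fin (n + 1)) ℝ := fun j k =>
  Real.sqrt (2 / n) * eps n j.val * eps n k.val *
    Real.cos (((j.val * k.val : ℕ) : ℝ) * Real.pi / n)

/-- DCT-II matrix of size `n × n`. -/
noncomputable def C2 (n : ℕ) : Matrix (Fin n) (Fin n) ℝ := fun j k =>
  Real.sqrt (2 / n) * eps n j.val *
    Real.cos (((j.val * (2 * k.val + 1) : ℕ) : ℝ) * Real.pi / (2 * n))

/-- DCT-III matrix: transpose of DCT-II. -/
noncomputable def C3 (n : ℕ) : Matrix (Fin n) (Fin n) ℝ := (C2 n)ᵀ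

/-- DCT-IV matrix of size `n × n`. -/
noncomputable def C4 (n : ℕ) : Matrix (Fin n) (Fin n) ℝ := fun j k =>
  Real.sqrt (2 / n) *
    Real.cos ((((2 * j.val + 1) * (2 * k.val + 1) : ℕ) : ℝ) * Real.pi / (4 * n))

/-- Block-diagonal matrix with diagonal blocks `A` (size `p`) and `B` (size `q`),
viewed as a matrix of size `n` (intended for `n = p + q`). -/
noncomputable def blkdiag {n p q : ℕ} (A : Matrix (Fin p) (Fin p) ℝ)
    (B : Matrix (Fin q) (Fin q) ℝ) : Matrix (Fin n) (Fin n) ℝ := fun i j =>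
  if hi : i.val < p then
    if hj : j.val < p then A ⟨i.val, hi⟩ ⟨j.val, hj⟩ else 0
  else
    if j.val < p then 0
    else
      if hi' : i.val - p < q then
        if hj' : j.val - p < q then B ⟨i.val - p, hi'⟩ ⟨j.val - p, hj'⟩ else 0
      else 0

/-- `2×2` block matrix `[[A, B], [C, D]]` with square blocks of size `p`,
viewed as a matrix of size `n` (intended for `n = p + p`). -/
noncomputable def blk4 {n p : ℕ} (A B C D : Matrix (Fin p) (Fin p) ℝ) :
    Matrix (Fin n) (Fin n) ℝ := fun i j =>
  if hi : i.val < p then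
    if hj : j.val < p then A ⟨i.val, hi⟩ ⟨j.val, hj⟩
    else if hj' : j.val - p < p then B ⟨i.val, hi⟩ ⟨j.val - p, hj'⟩ else 0
  else if hi' : i.val - p < p then
    if hj : j.val < p then C ⟨i.val - p, hi'⟩ ⟨j.val, hj⟩
    else if hj' : j.val - p < p then D ⟨i.val - p, hi'⟩ ⟨j.val - p, hj'⟩ else 0
  else 0

/-- Flip (anti-diagonal) matrix `Ĩ_m`. -/
noncomputable def flipMat (m : ℕ) : Matrix (Fin m) (Fin m) ℝ := fun i j =>
  if i.val + j.val + 1 = m then 1 else 0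

/-- Diagonal sign matrix `D_m = diag((-1)^k)`. -/
noncomputable def Dmat (m : ℕ) : Matrix (Fin m) (Fin m) ℝ :=
  Matrix.diagonal fun k => (-1 : ℝ) ^ (k.val)

/-- Even-odd permutation matrix `P_n` for even `n`:
`P_n x = (x_0, x_2, …, x_{n-2}, x_1, x_3, …, x_{n-1})`. -/
noncomputable def Pev (n : ℕ) : Matrix (Fin n) (Fin n) ℝ := fun i j =>
  if j.val = (if i.val < n / 2 then 2 * i.val else 2 * (i.val - n / 2) + 1) then 1 else 0

/-- Even-odd permutation matrix `P_{n+1}` of odd size `n+1` (for even `n`):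
`P_{n+1} x = (x_0, x_2, …, x_n, x_1, x_3, …, x_{n-1})`. -/
noncomputable def Podd (n : ℕ) : Matrix (Fin (n + 1)) (Fin (n + 1)) ℝ := fun i j =>
  if j.val = (if i.val ≤ n / 2 then 2 * i.val else 2 * (i.val - n / 2) - 1) then 1 else 0

/-- Butterfly matrix `H_n = (1/√2)[[I, Ĩ], [I, -Ĩ]]` with blocks of size `n/2`. -/
noncomputable def Hmat (n : ℕ) : Matrix (Fin n) (Fin n) ℝ :=
  (1 / Real.sqrt 2) •
    blk4 (1 : Matrix (Fin (n / 2)) (Fin (n / 2)) ℝ) (flipMat (n / 2)) 1 (-(flipMat (n / 2)))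

/-- Butterfly matrix `Ĥ_{n+1} = (1/√2)[[I, 0, Ĩ], [0, √2, 0], [I, 0, -Ĩ]]`
with corner blocks of size `n/2` and middle row/column indexed by `n/2`. -/
noncomputable def Hbrev (n : ℕ) : Matrix (Fin (n + 1)) (Fin (n + 1)) ℝ := fun i j =>
  (1 / Real.sqrt 2) *
    (if i.val < n / 2 then
      (if j.val < n / 2 then (if i.val = j.val then 1 else 0)
       else if j.val = n / 2 then 0
       else if i.val + (j.val - (n / 2 + 1)) + 1 = n / 2 then 1 else 0)
     else if i.val = n / 2 then (if j.val = n / 2 then Real.sqrt 2 else 0)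
     else
      (if j.val < n / 2 then (if i.val - (n / 2 + 1) = j.val then 1 else 0)
       else if j.val = n / 2 then 0
       else -(if (i.val - (n / 2 + 1)) + (j.val - (n / 2 + 1)) + 1 = n / 2 then 1 else 0)))

/-- The matrix `U_n`. -/
noncomputable def Umat (n : ℕ) : Matrix (Fin n) (Fin n) ℝ :=
  (blkdiag (n := n) (1 : Matrix (Fin 1) (Fin 1) ℝ)
    (blkdiag (n := n - 1)
      ((1 / Real.sqrt 2) • blk4 (n := n - 2)
        (1 : Matrix (Fin (n / 2 - 1)) (Fin (n / 2 - 1)) ℝ) 1 1 (-1))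
      (-1 : Matrix (Fin 1) (Fin 1) ℝ))) *
  blkdiag (n := n) (1 : Matrix (Fin (n / 2)) (Fin (n / 2)) ℝ) (Dmat (n / 2) * flipMat (n / 2))

/-- The rotation/rotation-reflection matrix `R_n`. -/
noncomputable def Rmat (n : ℕ) : Matrix (Fin n) (Fin n) ℝ :=
  blkdiag (n := n) (1 : Matrix (Fin (n / 2)) (Fin (n / 2)) ℝ) (Dmat (n / 2)) *
  blk4 (n := n)
    (Matrix.diagonal fun k : Fin (n / 2) =>
      Real.cos (((2 * k.val + 1 : ℕ) : ℝ) * Real.pi / (4 * n)))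
    ((Matrix.diagonal fun k : Fin (n / 2) =>
      Real.sin (((2 * k.val + 1 : ℕ) : ℝ) * Real.pi / (4 * n))) * flipMat (n / 2))
    (-(flipMat (n / 2) * Matrix.diagonal fun k : Fin (n / 2) =>
      Real.sin (((2 * k.val + 1 : ℕ) : ℝ) * Real.pi / (4 * n))))
    (Matrix.diagonal fun k : Fin (n / 2) =>
      Real.cos (((2 * (n / 2 - 1 - k.val) + 1 : ℕ) : ℝ) * Real.pi / (4 * n)))


lemma sum_single {N : ℕ} (f : Fin N → ℝ) (b₀ : Fin N)
    (h : ∀ b, b ≠ b₀ → f b = 0) : ∑ b, f b = f b₀ :=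
  Finset.sum_eq_single_of_mem b₀ (Finset.mem_univ _) fun b _ hb => h b hb

lemma eps_dbl (m t : ℕ) : eps (m + m) (t + t) = eps m t := by
  unfold eps; split_ifs <;> first | rfl | (exfalso; omega)

lemma eps_lt {m k : ℕ} (h : k < m) : eps (m + m) k = eps m k := by
  unfold eps; split_ifs <;> first | rfl | (exfalso; omega)

lemma eps_high {m k : ℕ} (h : m < k) (h2 : k ≤ m + m) :
    eps (m + m) k = eps m (m + m - k) := by
  unfold eps; split_ifs <;> first | rfl | (exfalso; omega)

lemma eps_one {m k : ℕ} (h1 : k ≠ 0) (h2 : k ≠ m) : eps m k = 1 := by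
  unfold eps; rw [if_neg (by omega)]

lemma eps_last (m : ℕ) : eps m m = 1 / Real.sqrt 2 := by
  unfold eps; rw [if_pos (Or.inr rfl)]

lemma sqrt_halve {m : ℕ} (h : m ≠ 0) :
    Real.sqrt (2 / ((m + m : ℕ) : ℝ)) = Real.sqrt (2 / (m : ℝ)) * (1 / Real.sqrt 2) := by
  have hm : (0:ℝ) < (m:ℝ) := by exact_mod_cast Nat.pos_of_ne_zero h
  rw [show (2 : ℝ) / ((m + m : ℕ) : ℝ) = (2 / (m:ℝ)) / 2 by push_cast; field_simp; ring,
    Real.sqrt_div (by positivity), div_eq_mul_one_div]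

lemma coskey1 {m t k : ℕ} (hm : m ≠ 0) :
    Real.cos ((((t + t) * k : ℕ) : ℝ) * Real.pi / ((m + m : ℕ) : ℝ))
      = Real.cos (((t * k : ℕ) : ℝ) * Real.pi / (m : ℝ)) := by
  have hm' : ((m:ℝ)) ≠ 0 := Nat.cast_ne_zero.mpr hm
  congr 1; push_cast; field_simp

lemma coskey3 {m t k : ℕ} (hm : m ≠ 0) (hk : k ≤ m + m) :
    Real.cos (((t * (m + m - k) : ℕ) : ℝ) * Real.pi / (m : ℝ))
      = Real.cos ((((t + t) * k : ℕ) : ℝ) * Real.pi / ((m + m : ℕ) : ℝ)) := by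
  have hm' : ((m:ℝ)) ≠ 0 := Nat.cast_ne_zero.mpr hm
  rw [show ((( t * (m + m - k) : ℕ)) : ℝ) * Real.pi / (m : ℝ)
      = (t : ℕ) * (2 * Real.pi) - (((t + t) * k : ℕ) : ℝ) * Real.pi / ((m + m : ℕ) : ℝ) by
    push_cast [Nat.cast_sub hk]; field_simp; ring]
  exact Real.cos_nat_mul_two_pi_sub _ t

lemma coskeyO1 {m t k : ℕ} (hm : m ≠ 0) :
    Real.cos (((k * (2 * t + 1) : ℕ) : ℝ) * Real.pi / (2 * (m : ℝ)))
      = Real.cos ((((2 * t + 1) * k : ℕ) : ℝ) * Real.pi / ((m + m : ℕ) : ℝ)) := by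
  have hm' : ((m:ℝ)) ≠ 0 := Nat.cast_ne_zero.mpr hm
  congr 1; push_cast; field_simp; ring

lemma coskeyO3 {m t k : ℕ} (hm : m ≠ 0) (hk : k ≤ m + m) :
    Real.cos ((((m + m - k) * (2 * t + 1) : ℕ) : ℝ) * Real.pi / (2 * (m : ℝ)))
      = -Real.cos ((((2 * t + 1) * k : ℕ) : ℝ) * Real.pi / ((m + m : ℕ) : ℝ)) := by
  have hm' : ((m:ℝ)) ≠ 0 := Nat.cast_ne_zero.mpr hm
  rw [show (((m + m - k) * (2 * t + 1) : ℕ) : ℝ) * Real.pi / (2 * (m : ℝ))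
      = (Real.pi - (((2 * t + 1) * k : ℕ) : ℝ) * Real.pi / ((m + m : ℕ) : ℝ))
        + (t : ℕ) * (2 * Real.pi) by
    push_cast [Nat.cast_sub hk]; field_simp; ring]
  rw [Real.cos_add_nat_mul_two_pi, Real.cos_pi_sub]

lemma coskeyO2 {m t : ℕ} (hm : m ≠ 0) :
    Real.cos ((((2 * t + 1) * m : ℕ) : ℝ) * Real.pi / ((m + m : ℕ) : ℝ)) = 0 := by
  have hm' : ((m:ℝ)) ≠ 0 := Nat.cast_ne_zero.mpr hm
  rw [show (((2 * t + 1) * m : ℕ) : ℝ) * Real.pi / ((m + m : ℕ) : ℝ)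
      = (t : ℕ) * Real.pi + Real.pi / 2 by push_cast; field_simp; ring]
  rw [Real.cos_add, Real.cos_pi_div_two, Real.sin_nat_mul_pi]
  ring

set_option maxHeartbeats 3200000 in
theorem dct1_factorization (n : ℕ) (hn : 4 ≤ n) (hev : Even n) :
    C1 n = (Podd n)ᵀ * blkdiag (C1 (n / 2)) (C3 (n / 2)) * Hbrev n := by
  obtain ⟨m, rfl⟩ := hev
  have hm : 2 ≤ m := by omega
  have hm2 : (m + m) / 2 = m := by omega
  rw [hm2]
  ext j k
  have hj1 : j.val < m + m + 1 := j.isLt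
  have hk1 : k.val < m + m + 1 := k.isLt
  simp only [Matrix.mul_apply, Matrix.transpose_apply]
  rcases Nat.even_or_odd j.val with ⟨t, ht⟩ | ⟨t, ht⟩
  · -- j even, j = t + t
    have htm : t ≤ m := by omega
    have hP1 : Podd (m + m) (⟨t, by omega⟩ : Fin (m + m + 1)) j = 1 := by
      simp only [Podd, hm2, Fin.val_mk]
      split_ifs <;> first | rfl | (exfalso; omega)
    have hP0 : ∀ a : Fin (m + m + 1), a ≠ ⟨t, by omega⟩ → Podd (m + m) a j = 0 := by
      intro a ha
      have ha' : a.val ≠ t := fun hc => ha (Fin.ext hc)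
      simp only [Podd, hm2]
      split_ifs <;> first | rfl | (exfalso; omega)
    have hrow : ∀ b, (∑ a, Podd (m + m) a j * blkdiag (C1 m) (C3 m) a b)
        = blkdiag (C1 m) (C3 m) ⟨t, by omega⟩ b := fun b => by
      rw [sum_single (fun a => Podd (m + m) a j * blkdiag (C1 m) (C3 m) a b) ⟨t, by omega⟩
        (fun a ha => by show Podd (m + m) a j * blkdiag (C1 m) (C3 m) a b = 0; rw [hP0 a ha, zero_mul]), hP1, one_mul]
    simp only [hrow]
    rcases lt_trichotomy k.val m with hk | hk | hk
    · -- k < m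
      rw [sum_single _ (⟨k.val, by omega⟩ : Fin (m + m + 1)) (fun b hb => by
        have hb' : b.val ≠ k.val := fun hc => hb (Fin.ext hc)
        have hbl : b.val < m + m + 1 := b.isLt
        simp only [blkdiag, Hbrev, hm2, Fin.val_mk]
        split_ifs <;> first | ring1 | (exfalso; omega))]
      simp only [blkdiag, Hbrev, hm2, Fin.val_mk]
      split_ifs <;> try (exfalso; omega)
      simp only [C1, Fin.val_mk]
      rw [ht, eps_dbl, eps_lt hk, sqrt_halve (by omega : m ≠ 0), coskey1 (by omega : m ≠ 0)]
      ring
    · -- k = m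
      rw [sum_single _ (⟨m, by omega⟩ : Fin (m + m + 1)) (fun b hb => by
        have hb' : b.val ≠ m := fun hc => hb (Fin.ext hc)
        have hbl : b.val < m + m + 1 := b.isLt
        simp only [blkdiag, Hbrev, hm2, Fin.val_mk]
        split_ifs <;> first | ring1 | (exfalso; omega))]
      simp only [blkdiag, Hbrev, hm2, Fin.val_mk]
      split_ifs <;> try (exfalso; omega)
      simp only [C1, Fin.val_mk]
      rw [ht, hk, eps_dbl, eps_one (by omega : m ≠ 0) (by omega : m ≠ m + m), eps_last,
        sqrt_halve (by omega : m ≠ 0), coskey1 (by omega : m ≠ 0)]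
      have hs2' : Real.sqrt 2 ≠ 0 := by positivity
      rw [one_div_mul_cancel hs2']
      ring
    · -- k > m
      rw [sum_single _ (⟨m + m - k.val, by omega⟩ : Fin (m + m + 1)) (fun b hb => by
        have hb' : b.val ≠ m + m - k.val := fun hc => hb (Fin.ext hc)
        have hbl : b.val < m + m + 1 := b.isLt
        simp only [blkdiag, Hbrev, hm2, Fin.val_mk]
        split_ifs <;> first | ring1 | (exfalso; omega))]
      simp only [blkdiag, Hbrev, hm2, Fin.val_mk]
      split_ifs <;> try (exfalso; omega)
      simp only [C1, Fin.val_mk]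
      rw [ht, eps_dbl, eps_high hk (by omega), sqrt_halve (by omega : m ≠ 0),
        coskey3 (by omega : m ≠ 0) (by omega : k.val ≤ m + m)]
      ring
  · -- j odd, j = 2 * t + 1
    have htm : t < m := by omega
    have hP1 : Podd (m + m) (⟨m + 1 + t, by omega⟩ : Fin (m + m + 1)) j = 1 := by
      simp only [Podd, hm2, Fin.val_mk]
      split_ifs <;> first | rfl | (exfalso; omega)
    have hP0 : ∀ a : Fin (m + m + 1), a ≠ ⟨m + 1 + t, by omega⟩ → Podd (m + m) a j = 0 := by
      intro a ha
      have ha' : a.val ≠ m + 1 + t := fun hc => ha (Fin.ext hc)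
      simp only [Podd, hm2]
      split_ifs <;> first | rfl | (exfalso; omega)
    have hrow : ∀ b, (∑ a, Podd (m + m) a j * blkdiag (C1 m) (C3 m) a b)
        = blkdiag (C1 m) (C3 m) ⟨m + 1 + t, by omega⟩ b := fun b => by
      rw [sum_single (fun a => Podd (m + m) a j * blkdiag (C1 m) (C3 m) a b)
        ⟨m + 1 + t, by omega⟩
        (fun a ha => by show Podd (m + m) a j * blkdiag (C1 m) (C3 m) a b = 0; rw [hP0 a ha, zero_mul]), hP1, one_mul]
    simp only [hrow]
    rcases lt_trichotomy k.val m with hk | hk | hk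
    · -- k < m
      rw [sum_single _ (⟨m + 1 + k.val, by omega⟩ : Fin (m + m + 1)) (fun b hb => by
        have hb' : b.val ≠ m + 1 + k.val := fun hc => hb (Fin.ext hc)
        have hbl : b.val < m + m + 1 := b.isLt
        simp only [blkdiag, Hbrev, hm2, Fin.val_mk]
        split_ifs <;> first | ring1 | (exfalso; omega))]
      simp only [blkdiag, Hbrev, hm2, Fin.val_mk]
      split_ifs <;> try (exfalso; omega)
      simp only [C3, Matrix.transpose_apply, C2, C1, Fin.val_mk]
      rw [show m + 1 + t - (m + 1) = t from by omega,
        show m + 1 + k.val - (m + 1) = k.val from by omega,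
        ht, eps_one (by omega : 2 * t + 1 ≠ 0) (by omega : 2 * t + 1 ≠ m + m),
        eps_lt hk, sqrt_halve (by omega : m ≠ 0), coskeyO1 (by omega : m ≠ 0)]
      ring
    · -- k = m
      rw [Finset.sum_eq_zero (fun b _ => by
        show blkdiag (C1 m) (C3 m) ⟨m + 1 + t, by omega⟩ b * Hbrev (m + m) b k = 0
        have hbl : b.val < m + m + 1 := b.isLt
        simp only [blkdiag, Hbrev, hm2, Fin.val_mk]
        split_ifs <;> first | ring1 | (exfalso; omega))]
      simp only [C1, Fin.val_mk]
      rw [ht, hk, coskeyO2 (by omega : m ≠ 0)]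
      ring
    · -- k > m
      rw [sum_single _ (⟨m + 1 + (m + m - k.val), by omega⟩ : Fin (m + m + 1)) (fun b hb => by
        have hb' : b.val ≠ m + 1 + (m + m - k.val) := fun hc => hb (Fin.ext hc)
        have hbl : b.val < m + m + 1 := b.isLt
        simp only [blkdiag, Hbrev, hm2, Fin.val_mk]
        split_ifs <;> first | ring1 | (exfalso; omega))]
      simp only [blkdiag, Hbrev, hm2, Fin.val_mk]
      split_ifs <;> try (exfalso; omega)
      simp only [C3, Matrix.transpose_apply, C2, C1, Fin.val_mk]
      rw [show m + 1 + t - (m + 1) = t from by omega,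
        show m + 1 + (m + m - k.val) - (m + 1) = m + m - k.val from by omega,
        ht, eps_one (by omega : 2 * t + 1 ≠ 0) (by omega : 2 * t + 1 ≠ m + m),
        eps_high hk (by omega), sqrt_halve (by omega : m ≠ 0),
        coskeyO3 (by omega : m ≠ 0) (by omega : k.val ≤ m + m)]
      ring
end

section
/- Let n ≥ 4 be an even integer. Then the DCT-II matrix satisfies the factorization C^II_n = P_n^T · blkdiag(C^II_{n/2}, C^IV_{n/2}) · H_n, where blkdiag(A,B) denotes the block-diagonal matrix with diagonal blocks A and B. -/
open Matrix Real

private lemma PT_mul_apply {n : ℕ} (M : Matrix (Fin n) (Fin n) ℝ) (j k a₀ : Fin n)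
    (ha : ∀ a : Fin n,
      j.val = (if a.val < n / 2 then 2 * a.val else 2 * (a.val - n / 2) + 1) ↔ a = a₀) :
    ((Pev n)ᵀ * M) j k = M a₀ k := by
  rw [Matrix.mul_apply]
  rw [Finset.sum_eq_single a₀]
  · rw [Matrix.transpose_apply]
    unfold Pev
    rw [if_pos ((ha a₀).2 rfl), one_mul]
  · intro b _ hb
    have h : ¬ (j.val = if b.val < n / 2 then 2 * b.val else 2 * (b.val - n / 2) + 1) :=
      fun h => hb ((ha b).1 h)
    rw [Matrix.transpose_apply]
    unfold Pev
    rw [if_neg h, zero_mul]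
  · intro h; exact absurd (Finset.mem_univ a₀) h

private lemma mul_apply_single {n : ℕ} (M H : Matrix (Fin n) (Fin n) ℝ) (a k b₀ : Fin n)
    (h : ∀ b : Fin n, b ≠ b₀ → M a b * H b k = 0) :
    (M * H) a k = M a b₀ * H b₀ k := by
  rw [Matrix.mul_apply]
  exact Finset.sum_eq_single b₀ (fun b _ hb => h b hb)
    (fun h => absurd (Finset.mem_univ b₀) h)

private lemma sqrt_two_div_two_mul (m : ℕ) (hm : 0 < m) :
    Real.sqrt (2 / ((m : ℝ) + m)) = Real.sqrt (2 / (m : ℝ)) * (1 / Real.sqrt 2) := by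
  have hmR : (0 : ℝ) < m := by exact_mod_cast hm
  rw [show (2 : ℝ) / ((m : ℝ) + m) = (2 / (m : ℝ)) * (2⁻¹) by field_simp; ring]
  rw [Real.sqrt_mul (by positivity), Real.sqrt_inv]
  rw [one_div]

private lemma cos_reflect_even (m a k : ℕ) (hm : 0 < m) (hk1 : m ≤ k) (hk2 : k < 2 * m) :
    Real.cos (((a * (2 * (2 * m - 1 - k) + 1) : ℕ) : ℝ) * Real.pi / (2 * m)) =
      Real.cos (((a * (2 * k + 1) : ℕ) : ℝ) * Real.pi / (2 * m)) := by
  have hmR : (0 : ℝ) < m := by exact_mod_cast hm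
  have h1 : (a * (2 * (2 * m - 1 - k) + 1) : ℕ) = a * (4 * m) - a * (2 * k + 1) := by
    rw [show 2 * (2 * m - 1 - k) + 1 = 4 * m - (2 * k + 1) by omega, Nat.mul_sub]
  rw [h1, Nat.cast_sub (Nat.mul_le_mul le_rfl (by omega))]
  rw [show ((((a * (4 * m) : ℕ) : ℝ) - ((a * (2 * k + 1) : ℕ) : ℝ)) * Real.pi / (2 * m)) =
      (a : ℝ) * (2 * Real.pi) - ((a * (2 * k + 1) : ℕ) : ℝ) * Real.pi / (2 * m) by
    push_cast; field_simp; ring]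
  exact Real.cos_nat_mul_two_pi_sub _ a

private lemma cos_reflect_odd (m c k : ℕ) (hm : 0 < m) (hk1 : m ≤ k) (hk2 : k < 2 * m) :
    Real.cos ((((2 * c + 1) * (2 * (2 * m - 1 - k) + 1) : ℕ) : ℝ) * Real.pi / (4 * m)) =
      -Real.cos ((((2 * c + 1) * (2 * k + 1) : ℕ) : ℝ) * Real.pi / (4 * m)) := by
  have hmR : (0 : ℝ) < m := by exact_mod_cast hm
  have h1 : ((2 * c + 1) * (2 * (2 * m - 1 - k) + 1) : ℕ) =
      (2 * c + 1) * (4 * m) - (2 * c + 1) * (2 * k + 1) := by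
    rw [show 2 * (2 * m - 1 - k) + 1 = 4 * m - (2 * k + 1) by omega, Nat.mul_sub]
  rw [h1, Nat.cast_sub (Nat.mul_le_mul le_rfl (by omega))]
  rw [show (((((2 * c + 1) * (4 * m) : ℕ) : ℝ) - (((2 * c + 1) * (2 * k + 1) : ℕ) : ℝ)) *
        Real.pi / (4 * m)) =
      (c : ℝ) * (2 * Real.pi) +
        (Real.pi - (((2 * c + 1) * (2 * k + 1) : ℕ) : ℝ) * Real.pi / (4 * m)) by
    push_cast; field_simp; ring]
  rw [add_comm, Real.cos_add_nat_mul_two_pi, Real.cos_pi_sub]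

private lemma dct2_factorization_aux (m : ℕ) (hm2 : 2 ≤ m) :
    C2 (m + m) = (Pev (m + m))ᵀ * blkdiag (n := m + m) (C2 m) (C4 m) * Hmat (m + m) := by
  have hmR : (0 : ℝ) < m := by exact_mod_cast (by omega : 0 < m)
  have hs : Real.sqrt (2 / ((m + m : ℕ) : ℝ)) =
      Real.sqrt (2 / (m : ℝ)) * (1 / Real.sqrt 2) := by
    push_cast
    exact sqrt_two_div_two_mul m (by omega)
  ext j k
  rw [Matrix.mul_assoc]
  rcases Nat.even_or_odd j.val with ⟨a, hj⟩ | ⟨a, hj⟩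
  · -- even row j = a + a
    have haval : a < m := by omega
    rw [PT_mul_apply _ j k ⟨a, by omega⟩ ?_]
    swap
    · intro a'
      constructor
      · intro h
        refine Fin.ext ?_
        show a'.val = a
        split at h <;> omega
      · rintro rfl
        show j.val = if a < (m + m) / 2 then 2 * a else 2 * (a - (m + m) / 2) + 1
        rw [if_pos (show a < (m + m) / 2 by omega)]
        omega
    have heps : eps (m + m) j.val = eps m a := by
      have h : (j.val = 0 ∨ j.val = m + m) ↔ (a = 0 ∨ a = m) := by omega
      simp only [eps, h]
    have hcos : Real.cos (((j.val * (2 * k.val + 1) : ℕ) : ℝ) * Real.pi / (2 * (m + m : ℕ))) =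
        Real.cos (((a * (2 * k.val + 1) : ℕ) : ℝ) * Real.pi / (2 * (m : ℕ))) := by
      congr 1
      rw [hj]
      push_cast
      field_simp
    by_cases hk : k.val < m
    · rw [mul_apply_single _ _ _ _ k ?_]
      swap
      · intro b hb
        by_cases hbm : b.val < m
        · have hz : Hmat (m + m) b k = 0 := by
            simp only [Hmat, blk4, Matrix.smul_apply, smul_eq_mul]
            rw [dif_pos (show b.val < (m + m) / 2 by omega),
              dif_pos (show k.val < (m + m) / 2 by omega),
              Matrix.one_apply_ne (by
                intro h
                rw [Fin.mk.injEq] at h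
                exact hb (Fin.ext h))]
            ring
          rw [hz, mul_zero]
        · have hz : blkdiag (n := m + m) (C2 m) (C4 m) ⟨a, by omega⟩ b = 0 := by
            simp only [blkdiag]
            rw [dif_pos haval, dif_neg hbm]
          rw [hz, zero_mul]
      have hB : blkdiag (n := m + m) (C2 m) (C4 m) (⟨a, by omega⟩ : Fin (m + m)) k =
          C2 m ⟨a, haval⟩ ⟨k.val, hk⟩ := by
        simp only [blkdiag]
        rw [dif_pos haval, dif_pos hk]
      have hH : Hmat (m + m) k k = 1 / Real.sqrt 2 := by
        simp only [Hmat, blk4, Matrix.smul_apply, smul_eq_mul]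
        rw [dif_pos (show k.val < (m + m) / 2 by omega),
          dif_pos (show k.val < (m + m) / 2 by omega), Matrix.one_apply_eq]
        ring
      rw [hB, hH]
      simp only [C2]
      rw [heps, hs, hcos]
      ring
    · -- k ≥ m, even row
      have hb0 : 2 * m - 1 - k.val < m := by omega
      rw [mul_apply_single _ _ _ _ ⟨2 * m - 1 - k.val, by omega⟩ ?_]
      swap
      · intro b hb
        by_cases hbm : b.val < m
        · have hz : Hmat (m + m) b k = 0 := by
            simp only [Hmat, blk4, Matrix.smul_apply, smul_eq_mul, flipMat]
            rw [dif_pos (show b.val < (m + m) / 2 by omega),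
              dif_neg (show ¬ k.val < (m + m) / 2 by omega),
              dif_pos (show k.val - (m + m) / 2 < (m + m) / 2 by omega)]
            rw [if_neg (by
              show ¬ (b.val + (k.val - (m + m) / 2) + 1 = (m + m) / 2)
              intro h
              exact hb (Fin.ext (show b.val = 2 * m - 1 - k.val by omega)))]
            ring
          rw [hz, mul_zero]
        · have hz : blkdiag (n := m + m) (C2 m) (C4 m) ⟨a, by omega⟩ b = 0 := by
            simp only [blkdiag]
            rw [dif_pos haval, dif_neg hbm]
          rw [hz, zero_mul]
      have hB : blkdiag (n := m + m) (C2 m) (C4 m) (⟨a, by omega⟩ : Fin (m + m))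
          ⟨2 * m - 1 - k.val, by omega⟩ = C2 m ⟨a, haval⟩ ⟨2 * m - 1 - k.val, hb0⟩ := by
        simp only [blkdiag]
        rw [dif_pos haval, dif_pos hb0]
      have hH : Hmat (m + m) ⟨2 * m - 1 - k.val, by omega⟩ k = 1 / Real.sqrt 2 := by
        simp only [Hmat, blk4, Matrix.smul_apply, smul_eq_mul, flipMat]
        rw [dif_pos (show 2 * m - 1 - k.val < (m + m) / 2 by omega),
          dif_neg (show ¬ k.val < (m + m) / 2 by omega),
          dif_pos (show k.val - (m + m) / 2 < (m + m) / 2 by omega),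
          if_pos (show 2 * m - 1 - k.val + (k.val - (m + m) / 2) + 1 = (m + m) / 2 by omega)]
        ring
      rw [hB, hH]
      simp only [C2]
      rw [heps, hs, cos_reflect_even m a k.val (by omega) (by omega) (by omega), hcos]
      ring
  · -- odd row j = 2 * a + 1
    have haval : a < m := by omega
    have heps : eps (m + m) j.val = 1 := by
      simp only [eps]
      rw [if_neg (by omega)]
    rw [PT_mul_apply _ j k ⟨m + a, by omega⟩ ?_]
    swap
    · intro a'
      constructor
      · intro h
        refine Fin.ext ?_
        show a'.val = m + a
        split at h <;> omega
      · rintro rfl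
        show j.val = if m + a < (m + m) / 2 then 2 * (m + a)
          else 2 * (m + a - (m + m) / 2) + 1
        rw [if_neg (show ¬ m + a < (m + m) / 2 by omega)]
        omega
    have hcos : Real.cos (((j.val * (2 * k.val + 1) : ℕ) : ℝ) * Real.pi / (2 * (m + m : ℕ))) =
        Real.cos ((((2 * a + 1) * (2 * k.val + 1) : ℕ) : ℝ) * Real.pi / (4 * (m : ℕ))) := by
      congr 1
      rw [hj]
      push_cast
      field_simp
      ring
    by_cases hk : k.val < m
    · rw [mul_apply_single _ _ _ _ ⟨m + k.val, by omega⟩ ?_]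
      swap
      · intro b hb
        by_cases hbm : b.val < m
        · have hz : blkdiag (n := m + m) (C2 m) (C4 m) ⟨m + a, by omega⟩ b = 0 := by
            simp only [blkdiag]
            rw [dif_neg (show ¬ m + a < m by omega), if_pos hbm]
          rw [hz, zero_mul]
        · have hz : Hmat (m + m) b k = 0 := by
            simp only [Hmat, blk4, Matrix.smul_apply, smul_eq_mul]
            rw [dif_neg (show ¬ b.val < (m + m) / 2 by omega),
              dif_pos (show b.val - (m + m) / 2 < (m + m) / 2 by omega),
              dif_pos (show k.val < (m + m) / 2 by omega),
              Matrix.one_apply_ne (by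
                intro h
                rw [Fin.mk.injEq] at h
                exact hb (Fin.ext (show b.val = m + k.val by omega)))]
            ring
          rw [hz, mul_zero]
      have hB : blkdiag (n := m + m) (C2 m) (C4 m) (⟨m + a, by omega⟩ : Fin (m + m))
          ⟨m + k.val, by omega⟩ = C4 m ⟨a, haval⟩ ⟨k.val, hk⟩ := by
        simp only [blkdiag]
        rw [dif_neg (show ¬ m + a < m by omega), if_neg (show ¬ m + k.val < m by omega),
          dif_pos (show m + a - m < m by omega), dif_pos (show m + k.val - m < m by omega)]
        congr 1
        · exact Fin.ext (show m + a - m = a by omega)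
        · exact Fin.ext (show m + k.val - m = k.val by omega)
      have hH : Hmat (m + m) ⟨m + k.val, by omega⟩ k = 1 / Real.sqrt 2 := by
        simp only [Hmat, blk4, Matrix.smul_apply, smul_eq_mul]
        rw [dif_neg (show ¬ m + k.val < (m + m) / 2 by omega),
          dif_pos (show m + k.val - (m + m) / 2 < (m + m) / 2 by omega),
          dif_pos (show k.val < (m + m) / 2 by omega), Matrix.one_apply,
          if_pos (Fin.ext (show m + k.val - (m + m) / 2 = k.val by omega))]
        ring
      rw [hB, hH]
      simp only [C2, C4]
      rw [heps, hs, hcos]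
      ring
    · have hb0 : 2 * m - 1 - k.val < m := by omega
      rw [mul_apply_single _ _ _ _ ⟨m + (2 * m - 1 - k.val), by omega⟩ ?_]
      swap
      · intro b hb
        by_cases hbm : b.val < m
        · have hz : blkdiag (n := m + m) (C2 m) (C4 m) ⟨m + a, by omega⟩ b = 0 := by
            simp only [blkdiag]
            rw [dif_neg (show ¬ m + a < m by omega), if_pos hbm]
          rw [hz, zero_mul]
        · have hz : Hmat (m + m) b k = 0 := by
            simp only [Hmat, blk4, Matrix.smul_apply, smul_eq_mul, flipMat,
              Matrix.neg_apply]
            rw [dif_neg (show ¬ b.val < (m + m) / 2 by omega),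
              dif_pos (show b.val - (m + m) / 2 < (m + m) / 2 by omega),
              dif_neg (show ¬ k.val < (m + m) / 2 by omega),
              dif_pos (show k.val - (m + m) / 2 < (m + m) / 2 by omega)]
            rw [if_neg (by
              show ¬ (b.val - (m + m) / 2 + (k.val - (m + m) / 2) + 1 = (m + m) / 2)
              intro h
              exact hb (Fin.ext (show b.val = m + (2 * m - 1 - k.val) by omega)))]
            ring
          rw [hz, mul_zero]
      have hB : blkdiag (n := m + m) (C2 m) (C4 m) (⟨m + a, by omega⟩ : Fin (m + m))
          ⟨m + (2 * m - 1 - k.val), by omega⟩ = C4 m ⟨a, haval⟩ ⟨2 * m - 1 - k.val, hb0⟩ := by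
        simp only [blkdiag]
        rw [dif_neg (show ¬ m + a < m by omega),
          if_neg (show ¬ m + (2 * m - 1 - k.val) < m by omega),
          dif_pos (show m + a - m < m by omega),
          dif_pos (show m + (2 * m - 1 - k.val) - m < m by omega)]
        congr 1
        · exact Fin.ext (show m + a - m = a by omega)
        · exact Fin.ext (show m + (2 * m - 1 - k.val) - m = 2 * m - 1 - k.val by omega)
      have hH : Hmat (m + m) ⟨m + (2 * m - 1 - k.val), by omega⟩ k = -(1 / Real.sqrt 2) := by
        simp only [Hmat, blk4, Matrix.smul_apply, smul_eq_mul, flipMat, Matrix.neg_apply]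
        rw [dif_neg (show ¬ m + (2 * m - 1 - k.val) < (m + m) / 2 by omega),
          dif_pos (show m + (2 * m - 1 - k.val) - (m + m) / 2 < (m + m) / 2 by omega),
          dif_neg (show ¬ k.val < (m + m) / 2 by omega),
          dif_pos (show k.val - (m + m) / 2 < (m + m) / 2 by omega),
          if_pos (show m + (2 * m - 1 - k.val) - (m + m) / 2 + (k.val - (m + m) / 2) + 1 =
            (m + m) / 2 by omega)]
        ring
      rw [hB, hH]
      simp only [C2, C4]
      rw [heps, hs, cos_reflect_odd m a k.val (by omega) (by omega) (by omega), hcos]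
      ring

theorem dct2_factorization (n : ℕ) (hn : 4 ≤ n) (hev : Even n) :
    C2 n = (Pev n)ᵀ * blkdiag (C2 (n / 2)) (C4 (n / 2)) * Hmat n := by
  obtain ⟨m, rfl⟩ := hev
  rw [show (m + m) / 2 = m by omega]
  exact dct2_factorization_aux m (by omega)
end

section
/- Let n ≥ 4 be an even integer. Then the DCT-III matrix satisfies the factorization C^III_n = H_n^T · blkdiag(C^III_{n/2}, C^IV_{n/2}) · P_n, where blkdiag(A,B) denotes the block-diagonal matrix with diagonal blocks A and B. -/
open Matrix Real

lemma mul_perm_single {n : ℕ} (M P : Matrix (Fin n) (Fin n) ℝ) (j k b0 : Fin n)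
    (h1 : P b0 k = 1) (h0 : ∀ b : Fin n, b ≠ b0 → P b k = 0) :
    (M * P) j k = M j b0 := by
  rw [Matrix.mul_apply, Finset.sum_eq_single b0]
  · rw [h1, mul_one]
  · intro b _ hb; rw [h0 b hb, mul_zero]
  · intro h; exact absurd (Finset.mem_univ b0) h

lemma transpose_mul_single {n : ℕ} (M N : Matrix (Fin n) (Fin n) ℝ) (j b : Fin n) (a0 : Fin n)
    (h : ∀ a : Fin n, a ≠ a0 → M a j * N a b = 0) :
    (Mᵀ * N) j b = M a0 j * N a0 b := by
  rw [Matrix.mul_apply, Finset.sum_eq_single a0]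
  · rfl
  · intro a _ ha; exact h a ha
  · intro h; exact absurd (Finset.mem_univ a0) h

set_option maxHeartbeats 1600000 in
theorem dct3_factorization (n : ℕ) (hn : 4 ≤ n) (hev : Even n) :
    C3 n = (Hmat n)ᵀ * blkdiag (C3 (n / 2)) (C4 (n / 2)) * Pev n := by
  obtain ⟨m, hm⟩ := hev
  have hn2 : n = 2 * m := by omega
  have hhalf : n / 2 = m := by omega
  have hm2 : 2 ≤ m := by omega
  have hmR : (m : ℝ) ≠ 0 := Nat.cast_ne_zero.mpr (by omega)
  have hnR : (n : ℝ) = 2 * m := by exact_mod_cast hn2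
  have hs : Real.sqrt (2 / (n : ℝ)) = 1 / Real.sqrt 2 * Real.sqrt (2 / (m : ℝ)) := by
    rw [hnR, one_div, ← Real.sqrt_inv, ← Real.sqrt_mul (by positivity)]
    congr 1
    field_simp
  rw [hhalf]
  ext j k
  have hkn := k.isLt
  have hjn := j.isLt
  by_cases hk : 2 ∣ k.val
  · obtain ⟨t, ht⟩ := hk
    have htm : t < m := by omega
    have hkR : ((k.val : ℕ) : ℝ) = 2 * t := by exact_mod_cast ht
    have hb1 : Pev n ⟨t, by omega⟩ k = 1 := by
      simp only [Pev]
      split_ifs <;> first | rfl | omega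
    have hb0 : ∀ b : Fin n, b ≠ (⟨t, by omega⟩ : Fin n) → Pev n b k = 0 := by
      intro b hb
      have hbv : b.val ≠ t := by simpa [Fin.ext_iff] using hb
      have hbn := b.isLt
      simp only [Pev]
      split_ifs <;> first | rfl | omega
    rw [mul_perm_single _ (Pev n) j k ⟨t, by omega⟩ hb1 hb0]
    by_cases hj : j.val < m
    · have hvan : ∀ a : Fin n, a ≠ (⟨j.val, by omega⟩ : Fin n) →
          Hmat n a j * blkdiag (C3 m) (C4 m) a ⟨t, by omega⟩ = 0 := by
        intro a ha
        have hav : a.val ≠ j.val := by simpa [Fin.ext_iff] using ha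
        have han := a.isLt
        simp only [Hmat, blk4, blkdiag, flipMat, Matrix.smul_apply, smul_eq_mul,
          Matrix.one_apply, Matrix.neg_apply, Fin.mk.injEq]
        split_ifs <;> first | ring1 | (exfalso; omega)
      rw [transpose_mul_single (Hmat n) _ j _ ⟨j.val, by omega⟩ hvan]
      have hcos : Real.cos (((k.val * (2 * j.val + 1) : ℕ) : ℝ) * Real.pi / (2 * n))
          = Real.cos (((t * (2 * j.val + 1) : ℕ) : ℝ) * Real.pi / (2 * m)) := by
        congr 1
        push_cast
        rw [hkR, hnR]
        field_simp
      simp only [C3, Matrix.transpose_apply, C2, C4, Hmat, blk4, blkdiag, flipMat,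
        Matrix.smul_apply, smul_eq_mul, Matrix.one_apply, Matrix.neg_apply,
        Fin.mk.injEq, Nat.add_sub_cancel_left, eps]
      split_ifs <;> first | (exfalso; omega) | (rw [hs, hcos]; ring1)
    · have hvan : ∀ a : Fin n, a ≠ (⟨2 * m - 1 - j.val, by omega⟩ : Fin n) →
          Hmat n a j * blkdiag (C3 m) (C4 m) a ⟨t, by omega⟩ = 0 := by
        intro a ha
        have hav : a.val ≠ 2 * m - 1 - j.val := by simpa [Fin.ext_iff] using ha
        have han := a.isLt
        simp only [Hmat, blk4, blkdiag, flipMat, Matrix.smul_apply, smul_eq_mul,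
          Matrix.one_apply, Matrix.neg_apply, Fin.mk.injEq]
        split_ifs <;> first | ring1 | (exfalso; omega)
      rw [transpose_mul_single (Hmat n) _ j _ ⟨2 * m - 1 - j.val, by omega⟩ hvan]
      have hrR : ((2 * m - 1 - j.val : ℕ) : ℝ) = 2 * m - 1 - j.val := by
        rw [Nat.cast_sub (by omega), Nat.cast_sub (by omega)]
        push_cast; ring
      have hcos : Real.cos (((t * (2 * (2 * m - 1 - j.val) + 1) : ℕ) : ℝ) * Real.pi / (2 * m))
          = Real.cos (((k.val * (2 * j.val + 1) : ℕ) : ℝ) * Real.pi / (2 * n)) := by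
        rw [show ((t * (2 * (2 * m - 1 - j.val) + 1) : ℕ) : ℝ) * Real.pi / (2 * m)
            = (t : ℝ) * (2 * Real.pi)
              - ((k.val * (2 * j.val + 1) : ℕ) : ℝ) * Real.pi / (2 * n) from by
          push_cast [hrR]
          rw [hkR, hnR]
          field_simp
          ring]
        exact Real.cos_nat_mul_two_pi_sub _ t
      simp only [C3, Matrix.transpose_apply, C2, C4, Hmat, blk4, blkdiag, flipMat,
        Matrix.smul_apply, smul_eq_mul, Matrix.one_apply, Matrix.neg_apply,
        Fin.mk.injEq, Nat.add_sub_cancel_left, eps]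
      split_ifs <;> first | (exfalso; omega) | (rw [hs, ← hcos]; ring1)
  · obtain ⟨t, ht⟩ : ∃ t, k.val = 2 * t + 1 := ⟨k.val / 2, by omega⟩
    have htm : t < m := by omega
    have hkR : ((k.val : ℕ) : ℝ) = 2 * t + 1 := by exact_mod_cast ht
    have hb1 : Pev n ⟨m + t, by omega⟩ k = 1 := by
      simp only [Pev]
      split_ifs <;> first | rfl | omega
    have hb0 : ∀ b : Fin n, b ≠ (⟨m + t, by omega⟩ : Fin n) → Pev n b k = 0 := by
      intro b hb
      have hbv : b.val ≠ m + t := by simpa [Fin.ext_iff] using hb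
      have hbn := b.isLt
      simp only [Pev]
      split_ifs <;> first | rfl | omega
    rw [mul_perm_single _ (Pev n) j k ⟨m + t, by omega⟩ hb1 hb0]
    by_cases hj : j.val < m
    · have hvan : ∀ a : Fin n, a ≠ (⟨m + j.val, by omega⟩ : Fin n) →
          Hmat n a j * blkdiag (C3 m) (C4 m) a ⟨m + t, by omega⟩ = 0 := by
        intro a ha
        have hav : a.val ≠ m + j.val := by simpa [Fin.ext_iff] using ha
        have han := a.isLt
        simp only [Hmat, blk4, blkdiag, flipMat, Matrix.smul_apply, smul_eq_mul,
          Matrix.one_apply, Matrix.neg_apply, Fin.mk.injEq]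
        split_ifs <;> first | ring1 | (exfalso; omega)
      rw [transpose_mul_single (Hmat n) _ j _ ⟨m + j.val, by omega⟩ hvan]
      have hcos : Real.cos (((k.val * (2 * j.val + 1) : ℕ) : ℝ) * Real.pi / (2 * n))
          = Real.cos ((((2 * j.val + 1) * (2 * t + 1) : ℕ) : ℝ) * Real.pi / (4 * m)) := by
        congr 1
        push_cast
        rw [hkR, hnR]
        field_simp
        ring
      simp only [C3, Matrix.transpose_apply, C2, C4, Hmat, blk4, blkdiag, flipMat,
        Matrix.smul_apply, smul_eq_mul, Matrix.one_apply, Matrix.neg_apply,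
        Fin.mk.injEq, Nat.add_sub_cancel_left, eps]
      split_ifs <;> first | (exfalso; omega) | (rw [hs, hcos]; ring1)
    · have hvan : ∀ a : Fin n, a ≠ (⟨3 * m - 1 - j.val, by omega⟩ : Fin n) →
          Hmat n a j * blkdiag (C3 m) (C4 m) a ⟨m + t, by omega⟩ = 0 := by
        intro a ha
        have hav : a.val ≠ 3 * m - 1 - j.val := by simpa [Fin.ext_iff] using ha
        have han := a.isLt
        simp only [Hmat, blk4, blkdiag, flipMat, Matrix.smul_apply, smul_eq_mul,
          Matrix.one_apply, Matrix.neg_apply, Fin.mk.injEq]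
        split_ifs <;> first | ring1 | (exfalso; omega)
      rw [transpose_mul_single (Hmat n) _ j _ ⟨3 * m - 1 - j.val, by omega⟩ hvan]
      have hrR : ((3 * m - 1 - j.val - m : ℕ) : ℝ) = 2 * m - 1 - j.val := by
        rw [Nat.cast_sub (by omega), Nat.cast_sub (by omega), Nat.cast_sub (by omega)]
        push_cast; ring
      have hcos : Real.cos ((((2 * (3 * m - 1 - j.val - m) + 1) * (2 * t + 1) : ℕ) : ℝ)
            * Real.pi / (4 * m))
          = -Real.cos (((k.val * (2 * j.val + 1) : ℕ) : ℝ) * Real.pi / (2 * n)) := by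
        rw [show (((2 * (3 * m - 1 - j.val - m) + 1) * (2 * t + 1) : ℕ) : ℝ)
            * Real.pi / (4 * m)
            = (t : ℝ) * (2 * Real.pi)
              - (((k.val * (2 * j.val + 1) : ℕ) : ℝ) * Real.pi / (2 * n) - Real.pi) from by
          push_cast [hrR]
          rw [hkR, hnR]
          field_simp
          ring]
        rw [Real.cos_nat_mul_two_pi_sub, Real.cos_sub_pi]
      simp only [C3, Matrix.transpose_apply, C2, C4, Hmat, blk4, blkdiag, flipMat,
        Matrix.smul_apply, smul_eq_mul, Matrix.one_apply, Matrix.neg_apply,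
        Fin.mk.injEq, Nat.add_sub_cancel_left, eps]
      split_ifs <;> first | (exfalso; omega) | (rw [hs, hcos]; ring1)
end

section
/- Let a : ℕ → ℝ satisfy a(1) = 2, a(2) = 8, and the recurrence a(t) = a(t−1) + 2·a(t−2) + 2^{t+1} − 2 for all t ≥ 3. Then for all t ≥ 1, a(t) = (4/3)·t·2^t − (8/9)·2^t − (1/9)·(−1)^t + 1. (This is the addition count of the recursive radix-2 DCT-II algorithm of length n = 2^t.) -/
/-- Addition count of the recursive radix-2 DCT-II algorithm of length `n = 2^t`. -/
theorem dct2_addition_count (a : ℕ → ℝ) (h1 : a 1 = 2) (h2 : a 2 = 8)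
    (hrec : ∀ t : ℕ, 3 ≤ t → a t = a (t - 1) + 2 * a (t - 2) + 2 ^ (t + 1) - 2) :
    ∀ t : ℕ, 1 ≤ t →
      a t = 4 / 3 * t * 2 ^ t - 8 / 9 * 2 ^ t - 1 / 9 * (-1 : ℝ) ^ t + 1 := by
  intro t
  induction t using Nat.strong_induction_on with
  | _ t ih =>
    intro ht
    match t, ht with
    | 1, _ => norm_num [h1]
    | 2, _ => norm_num [h2]
    | (n+3), _ =>
      have ha := ih (n+2) (by omega) (by omega)
      have hb := ih (n+1) (by omega) (by omega)
      have hr := hrec (n+3) (by omega)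
      simp only [show n+3-1 = n+2 from rfl, show n+3-2 = n+1 from rfl] at hr
      rw [hr, ha, hb]
      push_cast
      simp only [pow_succ]
      ring
end

section
/- Let m : ℕ → ℝ satisfy m(1) = 2, m(2) = 10, and the recurrence m(t) = m(t−1) + 2·m(t−2) + 5·2^{t−1} − 2 for all t ≥ 3. Then for all t ≥ 1, m(t) = (5/3)·t·2^t − (10/9)·2^t + (1/9)·(−1)^t + 1. (This is the multiplication count of the recursive radix-2 DCT-II algorithm of length n = 2^t.) -/
/-- Multiplication count of the recursive radix-2 DCT-II algorithm of length `n = 2^t`. -/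
theorem dct2_multiplication_count (m : ℕ → ℝ) (h1 : m 1 = 2) (h2 : m 2 = 10)
    (hrec : ∀ t : ℕ, 3 ≤ t → m t = m (t - 1) + 2 * m (t - 2) + 5 * 2 ^ (t - 1) - 2) :
    ∀ t : ℕ, 1 ≤ t →
      m t = 5 / 3 * t * 2 ^ t - 10 / 9 * 2 ^ t + 1 / 9 * (-1 : ℝ) ^ t + 1 := by
  intro t
  induction t using Nat.strong_induction_on with
  | _ t ih =>
    intro ht
    match t, ht with
    | 1, _ => rw [h1]; norm_num
    | 2, _ => rw [h2]; norm_num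
    | (k+3), _ =>
      have hA := ih (k+2) (by omega) (by omega)
      have hB := ih (k+1) (by omega) (by omega)
      have hr := hrec (k+3) (by omega)
      have e1 : k + 3 - 1 = k + 2 := by omega
      have e2 : k + 3 - 2 = k + 1 := by omega
      rw [e1, e2, hA, hB] at hr
      rw [hr]
      push_cast
      ring_nf
end

section
/- Let a : ℕ → ℝ satisfy a(1) = 2 and the recurrence a(t) = a(t−1) + [(4/3)·(t−1)·2^{t−1} − (2/9)·2^{t−1} + (2/9)·(−1)^{t−1}] + 2^t for all t ≥ 2. Then for all t ≥ 1, a(t) = (4/3)·t·2^t − (8/9)·2^t − (1/9)·(−1)^t + 1. (This is the addition count of the recursive radix-2 DCT-III algorithm of length n = 2^t, which equals the addition count of the DCT-II algorithm of the same length.) -/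
/-- Addition count of the recursive radix-2 DCT-III algorithm of length `n = 2^t`. -/
theorem dct3_addition_count (a : ℕ → ℝ) (h1 : a 1 = 2)
    (hrec : ∀ t : ℕ, 2 ≤ t →
      a t = a (t - 1) + (4 / 3 * ((t : ℝ) - 1) * 2 ^ (t - 1) - 2 / 9 * 2 ^ (t - 1)
        + 2 / 9 * (-1 : ℝ) ^ (t - 1)) + 2 ^ t) :
    ∀ t : ℕ, 1 ≤ t →
      a t = 4 / 3 * t * 2 ^ t - 8 / 9 * 2 ^ t - 1 / 9 * (-1 : ℝ) ^ t + 1 := by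
  intro t ht
  induction t, ht using Nat.le_induction with
  | base => rw [h1]; norm_num
  | succ n hn ih =>
    have h := hrec (n + 1) (by omega)
    simp only [Nat.add_sub_cancel] at h
    rw [h, ih]
    push_cast
    ring
end

section
/- Let a : ℕ → ℝ satisfy a(1) = 4 and the recurrence a(t) − a(t−1) = (2/3)·t·2^t − (1/9)·2^t + (1/9)·(−1)^t + 1 for all t ≥ 2. Then for all t ≥ 1, a(t) = (4/3)·t·2^t − (14/9)·2^t + (1/18)·(−1)^t + t + 7/2. (This is the addition count of the recursive radix-2 DCT-I algorithm of length n + 1 = 2^t + 1.) -/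
/-- Addition count of the recursive radix-2 DCT-I algorithm of length `n + 1 = 2^t + 1`. -/
theorem dct1_addition_count (a : ℕ → ℝ) (h1 : a 1 = 4)
    (hrec : ∀ t : ℕ, 2 ≤ t →
      a t - a (t - 1) = 2 / 3 * t * 2 ^ t - 1 / 9 * 2 ^ t + 1 / 9 * (-1 : ℝ) ^ t + 1) :
    ∀ t : ℕ, 1 ≤ t →
      a t = 4 / 3 * t * 2 ^ t - 14 / 9 * 2 ^ t + 1 / 18 * (-1 : ℝ) ^ t + t + 7 / 2 := by
  intro t ht
  induction t, ht using Nat.le_induction with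
  | base => simp [h1]; norm_num
  | succ n hn ih =>
    have hr := hrec (n + 1) (by omega)
    simp only [Nat.add_sub_cancel] at hr
    have : a (n + 1) = a n + (2 / 3 * (n + 1) * 2 ^ (n + 1) - 1 / 9 * 2 ^ (n + 1)
        + 1 / 9 * (-1 : ℝ) ^ (n + 1) + 1) := by push_cast at hr ⊢; linarith
    rw [this, ih]
    push_cast
    ring
end

section
/- Let m : ℕ → ℝ satisfy m(1) = 5 and the recurrence m(t) − m(t−1) = (5/6)·t·2^t − (7/18)·2^t − (1/9)·(−1)^t + 1 for all t ≥ 2. Then for all t ≥ 1, m(t) = (5/3)·t·2^t − (22/9)·2^t − (1/18)·(−1)^t + t + 11/2. (This is the multiplication count of the recursive radix-2 DCT-I algorithm of length n + 1 = 2^t + 1.) -/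
/-- Multiplication count of the recursive radix-2 DCT-I algorithm of length `n + 1 = 2^t + 1`. -/
theorem dct1_multiplication_count (m : ℕ → ℝ) (h1 : m 1 = 5)
    (hrec : ∀ t : ℕ, 2 ≤ t →
      m t - m (t - 1) = 5 / 6 * t * 2 ^ t - 7 / 18 * 2 ^ t - 1 / 9 * (-1 : ℝ) ^ t + 1) :
    ∀ t : ℕ, 1 ≤ t →
      m t = 5 / 3 * t * 2 ^ t - 22 / 9 * 2 ^ t - 1 / 18 * (-1 : ℝ) ^ t + t + 11 / 2 := by
  intro t ht
  induction t with
  | zero => omega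
  | succ n ih =>
    rcases Nat.eq_or_lt_of_le ht with h | h
    · simp [← h, h1]; norm_num
    · have hn : 1 ≤ n := by omega
      have ihn := ih hn
      have hr := hrec (n + 1) (by omega)
      simp only [Nat.add_sub_cancel] at hr
      push_cast at hr
      have : m (n + 1) = m n + (5 / 6 * (n+1) * 2 ^ (n+1) - 7 / 18 * 2 ^ (n+1) - 1 / 9 * (-1 : ℝ) ^ (n+1) + 1) := by
        linarith
      rw [this, ihn]
      push_cast
      ring
end

section
/- For every even integer n ≥ 2, the DCT-I matrix C^I_{n+1} is its own inverse: C^I_{n+1} · C^I_{n+1} = I_{n+1}. -/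
open Matrix Real

open Finset in
lemma sumT_aux (n : ℕ) (hn : 0 < n) (m : ℤ) :
    ∑ l ∈ Finset.range (2 * n), Real.cos ((m : ℝ) * l * π / n) =
      if (2 * (n : ℤ)) ∣ m then (2 * n : ℝ) else 0 := by
  have hn' : (n : ℝ) ≠ 0 := Nat.cast_ne_zero.mpr hn.ne'
  have hnC : (n : ℂ) ≠ 0 := Nat.cast_ne_zero.mpr hn.ne'
  set z : ℂ := Complex.exp (((m : ℝ) * π / n : ℝ) * Complex.I) with hzdef
  have hzl : ∀ l : ℕ, z ^ l = Complex.exp ((((m : ℝ) * l * π / n : ℝ)) * Complex.I) := by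
    intro l
    rw [hzdef, ← Complex.exp_nat_mul]
    congr 1
    push_cast
    ring
  have hre : ∑ l ∈ Finset.range (2 * n), Real.cos ((m : ℝ) * l * π / n)
      = (∑ l ∈ Finset.range (2 * n), z ^ l).re := by
    rw [Complex.re_sum]
    refine Finset.sum_congr rfl fun l _ => ?_
    rw [hzl l, Complex.exp_ofReal_mul_I_re]
  rw [hre]
  by_cases hdvd : (2 * (n : ℤ)) ∣ m
  · obtain ⟨t, ht⟩ := hdvd
    have hz1 : z = 1 := by
      rw [hzdef]
      have : (((m : ℝ) * π / n : ℝ) : ℂ) * Complex.I = (t : ℂ) * (2 * (π : ℂ) * Complex.I) := by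
        have hm : (m : ℝ) = 2 * n * t := by exact_mod_cast congrArg (Int.cast : ℤ → ℝ) ht
        push_cast [hm]
        field_simp
      rw [this, Complex.exp_int_mul_two_pi_mul_I]
    rw [if_pos ⟨t, ht⟩]
    simp [hz1]
  · have hzne : z ≠ 1 := by
      intro h
      rw [hzdef, Complex.exp_eq_one_iff] at h
      obtain ⟨k, hk⟩ := h
      apply hdvd
      refine ⟨k, ?_⟩
      have hk2 : (((m : ℝ) * π / n : ℝ) : ℂ) * Complex.I
          = ((((k : ℝ) * (2 * π)) : ℝ) : ℂ) * Complex.I := by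
        rw [hk]; push_cast; ring
      have hk3 : ((m : ℝ) * π / n) = (k : ℝ) * (2 * π) := by
        exact_mod_cast mul_right_cancel₀ Complex.I_ne_zero hk2
      have hπ : (π : ℝ) ≠ 0 := Real.pi_ne_zero
      have hm : (m : ℝ) = 2 * (n : ℝ) * (k : ℝ) := by
        apply mul_right_cancel₀ hπ
        field_simp at hk3
        linear_combination π * hk3
      exact_mod_cast hm
    have hzN : z ^ (2 * n) = 1 := by
      rw [hzl (2 * n)]
      rw [show (((m : ℝ) * ((2 * n : ℕ) : ℝ) * π / n : ℝ) : ℂ) * Complex.I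
          = (m : ℂ) * (2 * (π : ℂ) * Complex.I) by push_cast; field_simp]
      exact Complex.exp_int_mul_two_pi_mul_I m
    rw [geom_sum_eq hzne, hzN]
    simp [hdvd]

open Finset in
lemma sumS_aux (n : ℕ) (hn : 2 ≤ n) (m : ℤ) :
    ∑ l ∈ Finset.range (n + 1), (eps n l) ^ 2 * Real.cos ((m : ℝ) * l * π / n) =
      if (2 * (n : ℤ)) ∣ m then (n : ℝ) else 0 := by
  have hn0 : 0 < n := by omega
  have hn' : (n : ℝ) ≠ 0 := Nat.cast_ne_zero.mpr hn0.ne'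
  set f : ℕ → ℝ := fun l => Real.cos ((m : ℝ) * l * π / n) with hf
  have hpeel : ∀ g : ℕ → ℝ, ∑ l ∈ range (n + 1), g l
      = g 0 + (∑ i ∈ range (n - 1), g (i + 1)) + g n := by
    intro g
    rw [Finset.sum_range_succ, show n = (n - 1) + 1 from by omega, Finset.sum_range_succ']
    rw [show (n - 1) + 1 = n from by omega]
    ring
  have hrefl : ∑ l ∈ range n, f (n + l) = ∑ l ∈ range n, f (l + 1) := by
    rw [← Finset.sum_range_reflect (fun l => f (n + l)) n]
    refine Finset.sum_congr rfl fun l hl => ?_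
    rw [Finset.mem_range] at hl
    have h1 : n + (n - 1 - l) = 2 * n - (l + 1) := by omega
    have h2 : l + 1 ≤ 2 * n := by omega
    rw [hf]
    simp only
    have harg : (m : ℝ) * ((n + (n - 1 - l) : ℕ) : ℝ) * π / n
        = (m : ℝ) * (2 * π) - (m : ℝ) * ((l + 1 : ℕ) : ℝ) * π / n := by
      rw [h1]
      rw [Nat.cast_sub h2]
      push_cast
      field_simp
    rw [harg, Real.cos_int_mul_two_pi_sub]
  have hT : ∑ l ∈ range (2 * n), f l
      = 2 * (∑ l ∈ range (n + 1), f l) - f 0 - f n := by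
    rw [two_mul n, Finset.sum_range_add, hrefl]
    have e1 : ∑ l ∈ range n, f l = (∑ l ∈ range (n + 1), f l) - f n := by
      rw [Finset.sum_range_succ]; ring
    have e2 : ∑ l ∈ range n, f (l + 1) = (∑ l ∈ range (n + 1), f l) - f 0 := by
      rw [Finset.sum_range_succ']; ring
    rw [e1, e2]; ring
  have heps0 : (eps n 0) ^ 2 = 1 / 2 := by simp [eps]
  have hepsn : (eps n n) ^ 2 = 1 / 2 := by simp [eps]
  have hepsi : ∀ i, i < n - 1 → (eps n (i + 1)) ^ 2 = 1 := by
    intro i hi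
    have h : ¬(i + 1 = 0 ∨ i + 1 = n) := by omega
    simp only [eps, if_neg h, one_pow]
  have h2S : 2 * (∑ l ∈ range (n + 1), (eps n l) ^ 2 * f l) = ∑ l ∈ range (2 * n), f l := by
    rw [hT, hpeel (fun l => (eps n l) ^ 2 * f l), hpeel f]
    simp only [heps0, hepsn]
    have : ∑ i ∈ range (n - 1), (eps n (i + 1)) ^ 2 * f (i + 1)
        = ∑ i ∈ range (n - 1), f (i + 1) :=
      Finset.sum_congr rfl fun i hi => by
        rw [hepsi i (Finset.mem_range.mp hi), one_mul]
    rw [this]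
    ring
  have hTv := sumT_aux n hn0 m
  simp only [hf] at h2S
  by_cases hdvd : (2 * (n : ℤ)) ∣ m
  · rw [if_pos hdvd] at hTv ⊢
    rw [hTv] at h2S
    linarith [h2S]
  · rw [if_neg hdvd] at hTv ⊢
    rw [hTv] at h2S
    linarith [h2S]

theorem dct1_self_inverse (n : ℕ) (hn : 2 ≤ n) (hev : Even n) :
    C1 n * C1 n = 1 := by
  classical
  have hn0 : 0 < n := by omega
  have hn' : (n : ℝ) ≠ 0 := Nat.cast_ne_zero.mpr hn0.ne'
  ext j k
  rw [Matrix.mul_apply, Matrix.one_apply]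
  set m1 : ℤ := (j.val : ℤ) + (k.val : ℤ) with hm1
  set m2 : ℤ := (j.val : ℤ) - (k.val : ℤ) with hm2
  have hjle : j.val ≤ n := by omega
  have hkle : k.val ≤ n := by omega
  have step : ∑ l : Fin (n + 1), C1 n j l * C1 n l k
      = (eps n j.val * eps n k.val / n) *
        ((∑ l ∈ Finset.range (n + 1), (eps n l) ^ 2 * Real.cos ((m1 : ℝ) * l * π / n))
         + ∑ l ∈ Finset.range (n + 1), (eps n l) ^ 2 * Real.cos ((m2 : ℝ) * l * π / n)) := by
    rw [← Fin.sum_univ_eq_sum_range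
          (fun l => (eps n l) ^ 2 * Real.cos ((m1 : ℝ) * l * π / n)) (n + 1),
        ← Fin.sum_univ_eq_sum_range
          (fun l => (eps n l) ^ 2 * Real.cos ((m2 : ℝ) * l * π / n)) (n + 1),
        ← Finset.sum_add_distrib, Finset.mul_sum]
    refine Finset.sum_congr rfl fun l _ => ?_
    simp only [C1]
    have hs : Real.sqrt (2 / n) * Real.sqrt (2 / n) = 2 / n :=
      Real.mul_self_sqrt (by positivity)
    have hcc : ∀ a b : ℝ, Real.cos a * Real.cos b = (Real.cos (a + b) + Real.cos (a - b)) / 2 :=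
      fun a b => by rw [Real.cos_add, Real.cos_sub]; ring
    have h1 : ((j.val * l.val : ℕ) : ℝ) * π / n + ((l.val * k.val : ℕ) : ℝ) * π / n
        = (m1 : ℝ) * l.val * π / n := by rw [hm1]; push_cast; ring
    have h2 : ((j.val * l.val : ℕ) : ℝ) * π / n - ((l.val * k.val : ℕ) : ℝ) * π / n
        = (m2 : ℝ) * l.val * π / n := by rw [hm2]; push_cast; ring
    have hc := hcc (((j.val * l.val : ℕ) : ℝ) * π / n) (((l.val * k.val : ℕ) : ℝ) * π / n)
    rw [h1, h2] at hc
    calc Real.sqrt (2 / n) * eps n j.val * eps n l.val *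
            Real.cos (((j.val * l.val : ℕ) : ℝ) * π / n) *
          (Real.sqrt (2 / n) * eps n l.val * eps n k.val *
            Real.cos (((l.val * k.val : ℕ) : ℝ) * π / n))
        = (Real.sqrt (2 / n) * Real.sqrt (2 / n)) * (eps n j.val * eps n k.val) *
            (eps n l.val) ^ 2 *
            (Real.cos (((j.val * l.val : ℕ) : ℝ) * π / n) *
             Real.cos (((l.val * k.val : ℕ) : ℝ) * π / n)) := by ring
      _ = _ := by rw [hs, hc]; field_simp
  rw [step, sumS_aux n hn m1, sumS_aux n hn m2]
  have hnZ : (0 : ℤ) < 2 * n := by positivity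
  have hd1 : (2 * (n : ℤ)) ∣ m1 ↔ ((j.val = 0 ∧ k.val = 0) ∨ (j.val = n ∧ k.val = n)) := by
    constructor
    · rintro ⟨t, ht⟩
      rw [hm1] at ht
      have hb1 : (0 : ℤ) ≤ 2 * n * t := by rw [← ht]; positivity
      have hb2 : 2 * (n : ℤ) * t ≤ 2 * n := by rw [← ht]; omega
      have ht0 : 0 ≤ t := nonneg_of_mul_nonneg_right hb1 hnZ
      have ht1 : t ≤ 1 := by nlinarith
      interval_cases t
      · left; constructor <;> omega
      · right; constructor <;> omega
    · rintro (⟨h1, h2⟩ | ⟨h1, h2⟩) <;> rw [hm1, h1, h2]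
      · exact ⟨0, by ring⟩
      · exact ⟨1, by push_cast; ring⟩
  have hd2 : (2 * (n : ℤ)) ∣ m2 ↔ j = k := by
    constructor
    · rintro ⟨t, ht⟩
      rw [hm2] at ht
      have hb1 : -(n : ℤ) ≤ 2 * n * t := by rw [← ht]; omega
      have hb2 : 2 * (n : ℤ) * t ≤ n := by rw [← ht]; omega
      have ht0 : t = 0 := by
        rcases lt_trichotomy t 0 with h | h | h
        · exfalso; nlinarith
        · exact h
        · exfalso; nlinarith
      rw [ht0, mul_zero] at ht
      exact Fin.ext (by omega)
    · intro h
      rw [hm2, h, sub_self]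
      exact dvd_zero _
  by_cases hjk : j = k
  · rw [if_pos hjk, if_pos (hd2.mpr hjk)]
    have hkj : k.val = j.val := by rw [hjk]
    by_cases h0 : j.val = 0 ∨ j.val = n
    · have hdv : (2 * (n : ℤ)) ∣ m1 := by
        rcases h0 with h | h
        · exact hd1.mpr (Or.inl ⟨h, by omega⟩)
        · exact hd1.mpr (Or.inr ⟨h, by omega⟩)
      rw [if_pos hdv]
      have he : eps n j.val = 1 / Real.sqrt 2 := by simp only [eps, if_pos h0]
      have he' : eps n k.val = 1 / Real.sqrt 2 := by rw [hkj]; exact he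
      rw [he, he']
      have hs2 : Real.sqrt 2 * Real.sqrt 2 = 2 := Real.mul_self_sqrt (by norm_num)
      have hs2' : Real.sqrt 2 ≠ 0 := by positivity
      field_simp
      linarith [hs2]
    · have hdv : ¬(2 * (n : ℤ)) ∣ m1 := by
        intro h
        rcases hd1.mp h with ⟨h1, h2⟩ | ⟨h1, h2⟩ <;> exact h0 (by omega)
      rw [if_neg hdv]
      have he : eps n j.val = 1 := by simp only [eps, if_neg h0]
      have he' : eps n k.val = 1 := by rw [hkj]; exact he
      rw [he, he']
      field_simp
      ring
  · rw [if_neg hjk, if_neg (fun h => hjk (hd2.mp h))]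
    have hdv : ¬(2 * (n : ℤ)) ∣ m1 := by
      intro h
      rcases hd1.mp h with ⟨h1, h2⟩ | ⟨h1, h2⟩ <;> exact hjk (Fin.ext (by omega))
    rw [if_neg hdv]
    ring
end

section
/- For every integer n ≥ 2, the DCT-IV matrix C^IV_n is symmetric and is its own inverse: C^IV_n · C^IV_n = I_n. -/
open Matrix Real

section DCT4Aux
open Finset

lemma tele (θ x : ℝ) :
    2 * Real.sin θ * Real.cos x = Real.sin (x + θ) - Real.sin (x - θ) := by
  rw [Real.sin_add, Real.sin_sub]; ring

lemma keysum (n : ℕ) (θ : ℝ) :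
    2 * Real.sin θ * ∑ j ∈ Finset.range n, Real.cos ((2*j+1) * θ)
      = Real.sin (2*n*θ) := by
  induction n with
  | zero => simp
  | succ m ih =>
    rw [Finset.sum_range_succ, mul_add, ih, tele]
    have e1 : ((2*(m:ℝ)+1)*θ + θ) = 2*((m:ℝ)+1)*θ := by ring
    have e2 : ((2*(m:ℝ)+1)*θ - θ) = 2*(m:ℝ)*θ := by ring
    push_cast
    rw [e1, e2]
    ring

lemma Szero (n m : ℕ) (hm0 : 0 < m) (hm : m < 2*n) :
    ∑ j ∈ Finset.range n, Real.cos ((2*(j:ℝ)+1) * ((m:ℝ) * π / (2*n))) = 0 := by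
  have hθpos : 0 < (m:ℝ) * π / (2*n) := by
    have hn : 0 < n := by omega
    apply div_pos (mul_pos (by exact_mod_cast hm0) Real.pi_pos)
    positivity
  have hθlt : (m:ℝ) * π / (2*n) < π := by
    have hn : 0 < n := by omega
    rw [div_lt_iff₀ (by positivity)]
    have : (m:ℝ) < 2*n := by exact_mod_cast hm
    nlinarith [Real.pi_pos]
  have hs : Real.sin ((m:ℝ) * π / (2*n)) ≠ 0 :=
    ne_of_gt (Real.sin_pos_of_pos_of_lt_pi hθpos hθlt)
  have hk := keysum n ((m:ℝ) * π / (2*n))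
  have harg : 2*(n:ℝ)*((m:ℝ) * π / (2*n)) = m * π := by
    have hn : 0 < n := by omega
    have : (n:ℝ) ≠ 0 := by positivity
    field_simp
  rw [harg, Real.sin_nat_mul_pi] at hk
  have h2 : (2 : ℝ) * Real.sin ((m:ℝ) * π / (2*n)) ≠ 0 := by simpa using hs
  exact (mul_eq_zero.mp hk).resolve_left h2

lemma prod2sum (x y : ℝ) : Real.cos x * Real.cos y = (Real.cos (x+y) + Real.cos (x-y))/2 := by
  rw [Real.cos_add, Real.cos_sub]; ring

lemma offdiag (n k l : ℕ) (hk : k < n) (hl : l < n) (hlt : l < k) :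
    ∑ j ∈ Finset.range n,
      Real.cos ((((2*k+1)*(2*j+1) : ℕ) : ℝ) * π / (4*n)) *
      Real.cos ((((2*j+1)*(2*l+1) : ℕ) : ℝ) * π / (4*n)) = 0 := by
  have hn : 0 < n := by omega
  have hnR : (n:ℝ) ≠ 0 := by positivity
  set d := k - l with hd
  have hkld : k = l + d := by omega
  have hcongr : ∀ j ∈ Finset.range n,
      Real.cos ((((2*k+1)*(2*j+1) : ℕ) : ℝ) * π / (4*n)) *
      Real.cos ((((2*j+1)*(2*l+1) : ℕ) : ℝ) * π / (4*n))
      = (Real.cos ((2*(j:ℝ)+1) * (((k+l+1 : ℕ):ℝ) * π / (2*n)))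
         + Real.cos ((2*(j:ℝ)+1) * ((d:ℝ) * π / (2*n))))/2 := by
    intro j _
    rw [prod2sum]
    have e1 : (((2*k+1)*(2*j+1) : ℕ) : ℝ) * π / (4*n) + (((2*j+1)*(2*l+1) : ℕ) : ℝ) * π / (4*n)
        = (2*(j:ℝ)+1) * (((k+l+1 : ℕ):ℝ) * π / (2*n)) := by
      push_cast; field_simp; ring
    have e2 : (((2*k+1)*(2*j+1) : ℕ) : ℝ) * π / (4*n) - (((2*j+1)*(2*l+1) : ℕ) : ℝ) * π / (4*n)
        = (2*(j:ℝ)+1) * ((d:ℝ) * π / (2*n)) := by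
      rw [hkld]; push_cast; field_simp; ring
    rw [e1, e2]
  rw [Finset.sum_congr rfl hcongr]
  simp only [← Finset.sum_div, Finset.sum_add_distrib]
  rw [Szero n (k+l+1) (by omega) (by omega), Szero n d (by omega) (by omega)]
  norm_num

lemma diagsum (n k : ℕ) (hk : k < n) :
    ∑ j ∈ Finset.range n,
      Real.cos ((((2*k+1)*(2*j+1) : ℕ) : ℝ) * π / (4*n)) *
      Real.cos ((((2*j+1)*(2*k+1) : ℕ) : ℝ) * π / (4*n)) = n/2 := by
  have hn : 0 < n := by omega
  have hnR : (n:ℝ) ≠ 0 := by positivity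
  have hcongr : ∀ j ∈ Finset.range n,
      Real.cos ((((2*k+1)*(2*j+1) : ℕ) : ℝ) * π / (4*n)) *
      Real.cos ((((2*j+1)*(2*k+1) : ℕ) : ℝ) * π / (4*n))
      = (Real.cos ((2*(j:ℝ)+1) * (((2*k+1 : ℕ):ℝ) * π / (2*n))) + 1)/2 := by
    intro j _
    rw [prod2sum]
    have e1 : (((2*k+1)*(2*j+1) : ℕ) : ℝ) * π / (4*n) + (((2*j+1)*(2*k+1) : ℕ) : ℝ) * π / (4*n)
        = (2*(j:ℝ)+1) * (((2*k+1 : ℕ):ℝ) * π / (2*n)) := by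
      push_cast; field_simp; ring
    have e2 : (((2*k+1)*(2*j+1) : ℕ) : ℝ) * π / (4*n) - (((2*j+1)*(2*k+1) : ℕ) : ℝ) * π / (4*n) = 0 := by
      push_cast; ring
    rw [e1, e2, Real.cos_zero]
  rw [Finset.sum_congr rfl hcongr]
  simp only [← Finset.sum_div, Finset.sum_add_distrib]
  rw [Szero n (2*k+1) (by omega) (by omega)]
  simp

end DCT4Aux

theorem dct4_symm_self_inverse (n : ℕ) (hn : 2 ≤ n) :
    (C4 n)ᵀ = C4 n ∧ C4 n * C4 n = 1 := by
  have hn0 : 0 < n := by omega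
  have hnR : (0:ℝ) < n := by exact_mod_cast hn0
  constructor
  · ext j k
    simp only [Matrix.transpose_apply, C4]
    rw [Nat.mul_comm]
  · ext k l
    rw [Matrix.mul_apply, Matrix.one_apply]
    have hterm : ∀ j : Fin n, C4 n k j * C4 n j l =
        (2/(n:ℝ)) * (Real.cos ((((2*k.val+1)*(2*j.val+1) : ℕ) : ℝ) * π / (4*n)) *
          Real.cos ((((2*j.val+1)*(2*l.val+1) : ℕ) : ℝ) * π / (4*n))) := by
      intro j
      simp only [C4]
      have hs : Real.sqrt (2/n) * Real.sqrt (2/n) = 2/n :=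
        Real.mul_self_sqrt (by positivity)
      rw [show ∀ a b c : ℝ, (a*b)*(a*c) = (a*a)*(b*c) from fun a b c => by ring, hs]
    simp only [hterm]
    rw [← Finset.mul_sum]
    rw [Fin.sum_univ_eq_sum_range (fun j =>
      Real.cos ((((2*k.val+1)*(2*j+1) : ℕ) : ℝ) * π / (4*n)) *
      Real.cos ((((2*j+1)*(2*l.val+1) : ℕ) : ℝ) * π / (4*n)))]
    by_cases hkl : k = l
    · subst hkl
      rw [if_pos rfl, diagsum n k.val k.isLt]
      field_simp
    · rw [if_neg hkl]
      have hne : k.val ≠ l.val := fun h => hkl (Fin.ext h)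
      rcases lt_or_gt_of_ne hne with h | h
      · have hswap : ∀ j ∈ Finset.range n,
            Real.cos ((((2*k.val+1)*(2*j+1) : ℕ) : ℝ) * π / (4*n)) *
            Real.cos ((((2*j+1)*(2*l.val+1) : ℕ) : ℝ) * π / (4*n))
            = Real.cos ((((2*l.val+1)*(2*j+1) : ℕ) : ℝ) * π / (4*n)) *
              Real.cos ((((2*j+1)*(2*k.val+1) : ℕ) : ℝ) * π / (4*n)) := by
          intro j _
          rw [Nat.mul_comm (2*k.val+1), Nat.mul_comm (2*j+1) (2*l.val+1)]
          ring
        rw [Finset.sum_congr rfl hswap, offdiag n l.val k.val l.isLt k.isLt h]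
        ring
      · rw [offdiag n k.val l.val k.isLt l.isLt h]
        ring
end

section
/- Let A_0, …, A_m and ΔA_0, …, ΔA_m be n×n real matrices and δ_0, …, δ_m ≥ 0 such that |ΔA_k| ≤ δ_k·|A_k| entrywise for all k. Then, entrywise, |∏_{k=0}^m (A_k + ΔA_k) − ∏_{k=0}^m A_k| ≤ (∏_{k=0}^m (1 + δ_k) − 1) · ∏_{k=0}^m |A_k|. -/
open Matrix

/-- Entrywise absolute value of a real matrix. -/
noncomputable def matAbs {n : ℕ} (M : Matrix (Fin n) (Fin n) ℝ) :
    Matrix (Fin n) (Fin n) ℝ := fun i j => |M i j|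

lemma prod_one_add_ge_one (δ : ℕ → ℝ) (m : ℕ) (hδ : ∀ k, k ≤ m → 0 ≤ δ k) :
    1 ≤ (((List.range (m + 1)).map fun k => 1 + δ k).prod) := by
  induction m with
  | zero => simp [List.range_succ]; linarith [hδ 0 le_rfl]
  | succ m ih =>
      rw [List.range_succ, List.map_append, List.prod_append]
      simp only [List.map_cons, List.map_nil, List.prod_cons, List.prod_nil, mul_one]
      have h1 := ih (fun k hk => hδ k (hk.trans (Nat.le_succ m)))
      have h2 := hδ (m + 1) le_rfl
      nlinarith

lemma aux_bound (n : ℕ) (A ΔA : ℕ → Matrix (Fin n) (Fin n) ℝ) (δ : ℕ → ℝ) :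
    ∀ m : ℕ, (∀ k, k ≤ m → 0 ≤ δ k) →
      (∀ k, k ≤ m → ∀ i j, |ΔA k i j| ≤ δ k * |A k i j|) →
    ∀ i j,
      |(((List.range (m + 1)).map A).prod) i j|
          ≤ (((List.range (m + 1)).map fun k => matAbs (A k)).prod) i j ∧
      |(((List.range (m + 1)).map fun k => A k + ΔA k).prod) i j|
          ≤ (((List.range (m + 1)).map fun k => 1 + δ k).prod) *
              (((List.range (m + 1)).map fun k => matAbs (A k)).prod) i j ∧
      |(((List.range (m + 1)).map fun k => A k + ΔA k).prod) i j
          - (((List.range (m + 1)).map A).prod) i j|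
        ≤ ((((List.range (m + 1)).map fun k => 1 + δ k).prod) - 1) *
            (((List.range (m + 1)).map fun k => matAbs (A k)).prod) i j := by
  intro m
  induction m with
  | zero =>
      intro hδ h i j
      simp only [List.range_succ, List.range_zero, List.nil_append, List.map_cons,
        List.map_nil, List.prod_cons, List.prod_nil, mul_one, Matrix.mul_one,
        Matrix.add_apply, matAbs]
      refine ⟨le_refl _, ?_, ?_⟩
      · calc |A 0 i j + ΔA 0 i j| ≤ |A 0 i j| + |ΔA 0 i j| := abs_add_le _ _
          _ ≤ |A 0 i j| + δ 0 * |A 0 i j| := by linarith [h 0 le_rfl i j]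
          _ = (1 + δ 0) * |A 0 i j| := by ring
      · have := h 0 le_rfl i j
        calc |A 0 i j + ΔA 0 i j - A 0 i j| = |ΔA 0 i j| := by ring_nf
          _ ≤ δ 0 * |A 0 i j| := this
          _ = (1 + δ 0 - 1) * |A 0 i j| := by ring
  | succ m ih =>
      intro hδ h i j
      have hδ' : ∀ k, k ≤ m → 0 ≤ δ k := fun k hk => hδ k (hk.trans (Nat.le_succ m))
      have h' : ∀ k, k ≤ m → ∀ i j, |ΔA k i j| ≤ δ k * |A k i j| :=
        fun k hk => h k (hk.trans (Nat.le_succ m))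
      set P := (((List.range (m + 1)).map A).prod) with hP
      set Q := (((List.range (m + 1)).map fun k => A k + ΔA k).prod) with hQ
      set B := (((List.range (m + 1)).map fun k => matAbs (A k)).prod) with hB
      set d := (((List.range (m + 1)).map fun k => 1 + δ k).prod) with hd
      have hrw : ∀ (f : ℕ → Matrix (Fin n) (Fin n) ℝ),
          (((List.range (m + 2)).map f).prod) =
            (((List.range (m + 1)).map f).prod) * f (m + 1) := by
        intro f
        rw [List.range_succ, List.map_append, List.prod_append]
        simp
      have hrwr : (((List.range (m + 2)).map fun k => (1:ℝ) + δ k).prod) =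
          d * (1 + δ (m + 1)) := by
        rw [List.range_succ, List.map_append, List.prod_append]
        simp [hd]
      rw [hrw A, hrw (fun k => A k + ΔA k), hrw (fun k => matAbs (A k)), hrwr]
      have ihh := fun i j => ih hδ' h' i j
      have hd1 : 1 ≤ d := prod_one_add_ge_one δ m hδ'
      have hBnn : ∀ i j, 0 ≤ B i j := fun i j =>
        le_trans (abs_nonneg _) (ihh i j).1
      have hδm := hδ (m + 1) le_rfl
      have hhm := h (m + 1) le_rfl
      simp only [Matrix.mul_apply, Matrix.add_apply]
      refine ⟨?_, ?_, ?_⟩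
      · calc |∑ k, P i k * A (m + 1) k j| ≤ ∑ k, |P i k * A (m + 1) k j| :=
              Finset.abs_sum_le_sum_abs _ _
          _ ≤ ∑ k, B i k * matAbs (A (m + 1)) k j := by
              apply Finset.sum_le_sum
              intro k _
              rw [abs_mul]
              exact mul_le_mul_of_nonneg_right (ihh i k).1 (abs_nonneg _)
      · calc |∑ k, Q i k * (A (m + 1) k j + ΔA (m + 1) k j)|
              ≤ ∑ k, |Q i k| * |A (m + 1) k j + ΔA (m + 1) k j| := by
                refine le_trans (Finset.abs_sum_le_sum_abs _ _) ?_
                apply Finset.sum_le_sum; intro k _; rw [abs_mul]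
          _ ≤ ∑ k, (d * B i k) * ((1 + δ (m + 1)) * matAbs (A (m + 1)) k j) := by
                apply Finset.sum_le_sum
                intro k _
                apply mul_le_mul (ihh i k).2.1 _ (abs_nonneg _)
                  (mul_nonneg (le_trans zero_le_one hd1) (hBnn i k))
                calc |A (m + 1) k j + ΔA (m + 1) k j|
                    ≤ |A (m + 1) k j| + |ΔA (m + 1) k j| := abs_add_le _ _
                  _ ≤ |A (m + 1) k j| + δ (m + 1) * |A (m + 1) k j| := by
                      linarith [hhm k j]
                  _ = (1 + δ (m + 1)) * matAbs (A (m + 1)) k j := by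
                      simp [matAbs]; ring
          _ = d * (1 + δ (m + 1)) * ∑ k, B i k * matAbs (A (m + 1)) k j := by
                rw [Finset.mul_sum]; congr 1; ext k; ring
      · have key : ∀ k, |Q i k * (A (m + 1) k j + ΔA (m + 1) k j)
              - P i k * A (m + 1) k j|
            ≤ (d * (1 + δ (m + 1)) - 1) * (B i k * matAbs (A (m + 1)) k j) := by
          intro k
          have e1 : Q i k * (A (m + 1) k j + ΔA (m + 1) k j) - P i k * A (m + 1) k j
              = (Q i k - P i k) * A (m + 1) k j + Q i k * ΔA (m + 1) k j := by ring
          rw [e1]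
          calc |(Q i k - P i k) * A (m + 1) k j + Q i k * ΔA (m + 1) k j|
              ≤ |Q i k - P i k| * |A (m + 1) k j| + |Q i k| * |ΔA (m + 1) k j| := by
                refine le_trans (abs_add_le _ _) ?_
                rw [abs_mul, abs_mul]
            _ ≤ (d - 1) * B i k * |A (m + 1) k j|
                  + (d * B i k) * (δ (m + 1) * |A (m + 1) k j|) := by
                refine add_le_add
                  (mul_le_mul_of_nonneg_right (ihh i k).2.2 (abs_nonneg _))
                  (mul_le_mul (ihh i k).2.1 (hhm k j) (abs_nonneg _)
                    (mul_nonneg (le_trans zero_le_one hd1) (hBnn i k)))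
            _ = (d * (1 + δ (m + 1)) - 1) * (B i k * matAbs (A (m + 1)) k j) := by
                simp only [matAbs]; ring
        calc |(∑ k, Q i k * (A (m + 1) k j + ΔA (m + 1) k j))
                - ∑ k, P i k * A (m + 1) k j|
            = |∑ k, (Q i k * (A (m + 1) k j + ΔA (m + 1) k j)
                - P i k * A (m + 1) k j)| := by rw [Finset.sum_sub_distrib]
          _ ≤ ∑ k, |Q i k * (A (m + 1) k j + ΔA (m + 1) k j)
                - P i k * A (m + 1) k j| := Finset.abs_sum_le_sum_abs _ _
          _ ≤ ∑ k, (d * (1 + δ (m + 1)) - 1) * (B i k * matAbs (A (m + 1)) k j) :=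
                Finset.sum_le_sum fun k _ => key k
          _ = (d * (1 + δ (m + 1)) - 1) * ∑ k, B i k * matAbs (A (m + 1)) k j := by
                rw [Finset.mul_sum]

/-- Perturbation bound for a product of matrices (Higham):
if `|ΔA_k| ≤ δ_k |A_k|` entrywise for `k = 0, …, m`, then entrywise
`|∏ (A_k + ΔA_k) - ∏ A_k| ≤ (∏ (1 + δ_k) - 1) ∏ |A_k|`,
where products are taken in order of increasing index. -/
theorem product_perturbation_bound (n m : ℕ)
    (A ΔA : ℕ → Matrix (Fin n) (Fin n) ℝ) (δ : ℕ → ℝ)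
    (hδ : ∀ k, k ≤ m → 0 ≤ δ k)
    (h : ∀ k, k ≤ m → ∀ i j, |ΔA k i j| ≤ δ k * |A k i j|) :
    ∀ i j,
      |(((List.range (m + 1)).map fun k => A k + ΔA k).prod i j)
          - (((List.range (m + 1)).map A).prod i j)|
        ≤ ((((List.range (m + 1)).map fun k => 1 + δ k).prod) - 1) *
            (((List.range (m + 1)).map fun k => matAbs (A k)).prod i j) := by
  intro i j
  exact (aux_bound n A ΔA δ m hδ h i j).2.2
end
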